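/- arXiv:1105.0859 — 4 statements merged into one kernel-verified Lean document; each statement's English description precedes it below -/
import Mathlib

section
/- For all x in (0, π/2], the chain of inequalities 1/π ≤ sin x/(2x) ≤ (1 - cos x)/x² ≤ sin(x/2)/x ≤ 1/2 ≤ tan(x/2)/x ≤ 2/π holds. -/
open Real

lemma tan_convex_aux : ConvexOn ℝ (Set.Icc 0 (π/4)) Real.tan := by
  have hsub : Set.Icc (0:ℝ) (π/4) ⊆ {x | Real.cos x ≠ 0} := by
    intro y hy
    have h1 : (0:ℝ) ≤ y := hy.1
    have h2 : y ≤ π/4 := hy.2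
    have : 0 < Real.cos y := by
      apply Real.cos_pos_of_mem_Ioo
      constructor <;> nlinarith [Real.pi_pos]
    exact ne_of_gt this
  apply MonotoneOn.convexOn_of_deriv (convex_Icc _ _)
  · exact Real.continuousOn_tan.mono hsub
  · intro y hy
    rw [interior_Icc] at hy
    exact (Real.differentiableAt_tan.2 (hsub (Set.mem_Icc_of_Ioo hy))).differentiableWithinAt
  · rw [interior_Icc]
    intro a ha b hb hab
    rw [Real.deriv_tan, Real.deriv_tan]
    have hca : 0 < Real.cos a := by
      apply Real.cos_pos_of_mem_Ioo
      constructor <;> nlinarith [Real.pi_pos, ha.1, ha.2]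
    have hcb : 0 < Real.cos b := by
      apply Real.cos_pos_of_mem_Ioo
      constructor <;> nlinarith [Real.pi_pos, hb.1, hb.2]
    have hle : Real.cos b ≤ Real.cos a := by
      apply Real.cos_le_cos_of_nonneg_of_le_pi ha.1.le _ hab
      nlinarith [Real.pi_pos, hb.2]
    apply one_div_le_one_div_of_le (by positivity)
    nlinarith

lemma tan_le_aux {t : ℝ} (h0 : 0 ≤ t) (h1 : t ≤ π/4) : Real.tan t ≤ 4/π * t := by
  have hpi : 0 < π := Real.pi_pos
  have hb0 : 0 ≤ 4/π * t := by positivity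
  have hb1 : 4/π * t ≤ 1 := by
    rw [div_mul_eq_mul_div, div_le_one hpi]; linarith
  have key : Real.tan ((1 - 4/π * t) • (0:ℝ) + (4/π * t) • (π/4)) ≤
      (1 - 4/π * t) • Real.tan 0 + (4/π * t) • Real.tan (π/4) :=
    tan_convex_aux.2 (Set.mem_Icc.2 ⟨le_refl 0, by positivity⟩)
      (Set.mem_Icc.2 ⟨by positivity, le_refl (π/4)⟩) (by linarith) hb0 (by ring)
  simp only [smul_eq_mul, Real.tan_zero, Real.tan_pi_div_four] at key
  have heq : (1 - 4/π * t) * 0 + 4/π * t * (π/4) = t := by field_simp; ring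
  rw [heq] at key
  linarith

theorem stmt2 (x : ℝ) (hx : 0 < x) (hx2 : x ≤ π/2) :
    1/π ≤ Real.sin x/(2*x) ∧ Real.sin x/(2*x) ≤ (1 - Real.cos x)/x^2 ∧
    (1 - Real.cos x)/x^2 ≤ Real.sin (x/2)/x ∧ Real.sin (x/2)/x ≤ 1/2 ∧
    (1:ℝ)/2 ≤ Real.tan (x/2)/x ∧ Real.tan (x/2)/x ≤ 2/π := by
  have hpi : 0 < π := Real.pi_pos
  have ht0 : 0 < x/2 := by linarith
  have ht2 : x/2 ≤ π/4 := by linarith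
  have hsl : Real.sin (x/2) < x/2 := Real.sin_lt ht0
  have hsp : 0 < Real.sin (x/2) := Real.sin_pos_of_pos_of_lt_pi ht0 (by linarith)
  have hcp : 0 < Real.cos (x/2) := Real.cos_pos_of_mem_Ioo ⟨by linarith, by linarith⟩
  have htan : x/2 < Real.tan (x/2) := Real.lt_tan ht0 (by linarith)
  have hj : 2/π * x ≤ Real.sin x := Real.mul_le_sin hx.le hx2
  have htan4 : Real.tan (x/2) ≤ 4/π * (x/2) := tan_le_aux ht0.le ht2
  have hsin : Real.sin x = 2 * Real.sin (x/2) * Real.cos (x/2) := by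
    rw [← Real.sin_two_mul]; ring_nf
  have hcos : Real.cos x = 1 - 2 * Real.sin (x/2)^2 := by
    have h1 := Real.cos_two_mul' (x/2)
    rw [show 2 * (x/2) = x by ring] at h1
    have h2 := Real.sin_sq_add_cos_sq (x/2)
    nlinarith
  have htc : x/2 * Real.cos (x/2) < Real.sin (x/2) := by
    have := Real.tan_eq_sin_div_cos (x/2)
    rw [this, lt_div_iff₀ hcp] at htan
    linarith
  rw [div_mul_eq_mul_div, div_le_iff₀ hpi] at hj
  rw [div_mul_eq_mul_div, le_div_iff₀ hpi] at htan4
  refine ⟨?_, ?_, ?_, ?_, ?_, ?_⟩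
  · rw [div_le_div_iff₀ hpi (by linarith)]
    linarith
  · rw [div_le_div_iff₀ (by linarith) (by positivity), hsin, hcos]
    nlinarith [mul_le_mul_of_nonneg_left htc.le
      (show (0:ℝ) ≤ 2*Real.sin (x/2)*x by positivity)]
  · rw [div_le_div_iff₀ (by positivity) hx, hcos]
    nlinarith [mul_le_mul_of_nonneg_left hsl.le (le_of_lt (mul_pos hsp hx))]
  · rw [div_le_div_iff₀ hx (by norm_num)]
    nlinarith
  · rw [div_le_div_iff₀ (by norm_num) hx]
    nlinarith
  · rw [div_le_div_iff₀ hx hpi]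
    linarith
end

section
/- For all x in (0, π/2), sin x · sinh x < x². -/
open Real

private lemma sinh_lt_mul_cosh {x : ℝ} (hx : 0 < x) : Real.sinh x < x * Real.cosh x := by
  -- h t = t * cosh t - sinh t, h 0 = 0, h' t = t * sinh t > 0 for t > 0
  have key : StrictMonoOn (fun t : ℝ => t * Real.cosh t - Real.sinh t) (Set.Ici 0) := by
    apply strictMonoOn_of_deriv_pos (convex_Ici 0)
    · exact ((continuous_id.mul Real.continuous_cosh).sub Real.continuous_sinh).continuousOn
    · intro t ht
      rw [interior_Ici] at ht
      have hd : HasDerivAt (fun t : ℝ => t * Real.cosh t - Real.sinh t)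
          (1 * Real.cosh t + t * Real.sinh t - Real.cosh t) t :=
        ((hasDerivAt_id t).mul (Real.hasDerivAt_cosh t)).sub (Real.hasDerivAt_sinh t)
      rw [hd.deriv]
      have h1 : (0:ℝ) < t := ht
      have := Real.sinh_pos_iff.mpr h1
      nlinarith
  have := key (Set.self_mem_Ici) (Set.mem_Ici.mpr hx.le) hx
  simpa using this

private lemma cos_cosh_lt_one {x : ℝ} (hx : 0 < x) (hx2 : x ≤ π/2) :
    Real.cos x * Real.cosh x < 1 := by
  have key : StrictAntiOn (fun t : ℝ => Real.cos t * Real.cosh t) (Set.Icc 0 (π/2)) := by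
    apply strictAntiOn_of_deriv_neg (convex_Icc 0 (π/2))
    · exact (Real.continuous_cos.mul Real.continuous_cosh).continuousOn
    · intro t ht
      rw [interior_Icc] at ht
      have hd : HasDerivAt (fun t : ℝ => Real.cos t * Real.cosh t)
          (-Real.sin t * Real.cosh t + Real.cos t * Real.sinh t) t :=
        (Real.hasDerivAt_cos t).mul (Real.hasDerivAt_cosh t)
      rw [hd.deriv]
      -- need cos t * sinh t < sin t * cosh t, i.e. tanh t < tan t
      have hcos : 0 < Real.cos t := Real.cos_pos_of_mem_Ioo ⟨by linarith [ht.1, Real.pi_pos], ht.2⟩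
      have htan : t < Real.tan t := Real.lt_tan ht.1 ht.2
      have hsinh : Real.sinh t < t * Real.cosh t := sinh_lt_mul_cosh ht.1
      have hcosh : 0 < Real.cosh t := Real.cosh_pos t
      rw [Real.tan_eq_sin_div_cos] at htan
      have h1 : t * Real.cos t < Real.sin t := by
        rwa [lt_div_iff₀ hcos] at htan
      nlinarith
  have h0 : (0:ℝ) ∈ Set.Icc 0 (π/2) := ⟨le_refl _, by linarith [Real.pi_pos]⟩
  have hxm : x ∈ Set.Icc 0 (π/2) := ⟨hx.le, hx2⟩
  have := key h0 hxm hx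
  simpa using this

private lemma fprime_pos {x : ℝ} (hx : 0 < x) (hx2 : x ≤ π/2) :
    0 < 2*x - Real.cos x * Real.sinh x - Real.sin x * Real.cosh x := by
  have key : StrictMonoOn
      (fun t : ℝ => 2*t - Real.cos t * Real.sinh t - Real.sin t * Real.cosh t)
      (Set.Icc 0 (π/2)) := by
    apply strictMonoOn_of_deriv_pos (convex_Icc 0 (π/2))
    · exact (((continuous_const.mul continuous_id).sub
        (Real.continuous_cos.mul Real.continuous_sinh)).sub
        (Real.continuous_sin.mul Real.continuous_cosh)).continuousOn
    · intro t ht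
      rw [interior_Icc] at ht
      have hd : HasDerivAt
          (fun t : ℝ => 2*t - Real.cos t * Real.sinh t - Real.sin t * Real.cosh t)
          (2*1 - (-Real.sin t * Real.sinh t + Real.cos t * Real.cosh t)
            - (Real.cos t * Real.cosh t + Real.sin t * Real.sinh t)) t :=
        (((hasDerivAt_id t).const_mul 2).sub
          ((Real.hasDerivAt_cos t).mul (Real.hasDerivAt_sinh t))).sub
          ((Real.hasDerivAt_sin t).mul (Real.hasDerivAt_cosh t))
      rw [hd.deriv]
      have := cos_cosh_lt_one ht.1 ht.2.le
      nlinarith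
  have h0 : (0:ℝ) ∈ Set.Icc 0 (π/2) := ⟨le_refl _, by linarith [Real.pi_pos]⟩
  have hxm : x ∈ Set.Icc 0 (π/2) := ⟨hx.le, hx2⟩
  have := key h0 hxm hx
  simpa using this

theorem stmt10 (x : ℝ) (hx : 0 < x) (hx2 : x < π/2) :
    Real.sin x * Real.sinh x < x^2 := by
  have key : StrictMonoOn (fun t : ℝ => t^2 - Real.sin t * Real.sinh t)
      (Set.Icc 0 (π/2)) := by
    apply strictMonoOn_of_deriv_pos (convex_Icc 0 (π/2))
    · exact ((continuous_pow 2).sub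
        (Real.continuous_sin.mul Real.continuous_sinh)).continuousOn
    · intro t ht
      rw [interior_Icc] at ht
      have hd : HasDerivAt (fun t : ℝ => t^2 - Real.sin t * Real.sinh t)
          ((2:ℕ) * t^(2-1) - (Real.cos t * Real.sinh t + Real.sin t * Real.cosh t)) t :=
        (hasDerivAt_pow 2 t).sub
          ((Real.hasDerivAt_sin t).mul (Real.hasDerivAt_sinh t))
      rw [hd.deriv]
      have := fprime_pos ht.1 ht.2.le
      push_cast
      nlinarith
  have h0 : (0:ℝ) ∈ Set.Icc 0 (π/2) := ⟨le_refl _, by linarith [Real.pi_pos]⟩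
  have hxm : x ∈ Set.Icc 0 (π/2) := ⟨hx.le, hx2.le⟩
  have := key h0 hxm hx
  simp only [Real.sin_zero, Real.sinh_zero] at this
  nlinarith [this]
end

section
/- For all x > 0, sinh(x)/x < cosh³(x/3) < (cosh x + 2)/3. -/
open Real

lemma aux_sinh_lt {t : ℝ} (ht : 0 < t) : Real.sinh t < t * Real.cosh t := by
  have h : StrictMonoOn (fun t => t * Real.cosh t - Real.sinh t) (Set.Ici 0) := by
    apply strictMonoOn_of_deriv_pos (convex_Ici 0)
    · fun_prop
    · intro y hy
      rw [interior_Ici, Set.mem_Ioi] at hy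
      have hd : HasDerivAt (fun t => t * Real.cosh t - Real.sinh t) (y * Real.sinh y) y := by
        have := ((hasDerivAt_id' y).fun_mul (Real.hasDerivAt_cosh y)).fun_sub (Real.hasDerivAt_sinh y)
        refine this.congr_deriv ?_
        simp [mul_comm]
      rw [hd.deriv]
      exact mul_pos hy (Real.sinh_pos_iff.mpr hy)
  have := h Set.self_mem_Ici (Set.mem_Ici.mpr ht.le) ht
  simpa using this

lemma aux_main {x : ℝ} (hx : 0 < x) : Real.sinh x < x * (Real.cosh (x/3))^3 := by
  have h : StrictMonoOn (fun x => x * (Real.cosh (x/3))^3 - Real.sinh x) (Set.Ici 0) := by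
    apply strictMonoOn_of_deriv_pos (convex_Ici 0)
    · fun_prop
    · intro y hy
      rw [interior_Ici, Set.mem_Ioi] at hy
      set c := Real.cosh (y/3) with hc
      set s := Real.sinh (y/3) with hs
      have h1 : HasDerivAt (fun x : ℝ => Real.cosh (x/3)) (s * (1/3)) y := by
        have := (Real.hasDerivAt_cosh (y/3)).comp y ((hasDerivAt_id y).div_const 3)
        simpa [Function.comp_def] using this
      have h2 : HasDerivAt (fun x : ℝ => (Real.cosh (x/3))^3)
          (3 * c^2 * (s * (1/3))) y := by
        simpa using h1.fun_pow 3
      have hd : HasDerivAt (fun x => x * (Real.cosh (x/3))^3 - Real.sinh x)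
          (1 * c^3 + y * (3 * c^2 * (s * (1/3))) - Real.cosh y) y := by
        exact ((hasDerivAt_id y).mul h2).sub (Real.hasDerivAt_sinh y)
      rw [hd.deriv]
      have hcy : Real.cosh y = 4 * c^3 - 3 * c := by
        have := Real.cosh_three_mul (y/3)
        rw [show 3 * (y/3) = y by ring] at this
        rw [this]
      have hsq : s^2 = c^2 - 1 := by
        have := Real.sinh_sq (y/3); rw [← hs, ← hc] at this; linarith
      have hspos : 0 < s := Real.sinh_pos_iff.mpr (by linarith)
      have hcpos : 0 < c := Real.cosh_pos _
      have hkey : s < (y/3) * c := aux_sinh_lt (by linarith)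
      rw [hcy]
      nlinarith [mul_pos (mul_pos hcpos hspos) (show 0 < y * c - 3 * s by linarith),
        sq_nonneg s, sq_nonneg c]
  have := h Set.self_mem_Ici (Set.mem_Ici.mpr hx.le) hx
  simpa using this

theorem stmt11 (x : ℝ) (hx : 0 < x) :
    Real.sinh x/x < (Real.cosh (x/3))^3 ∧ (Real.cosh (x/3))^3 < (Real.cosh x + 2)/3 := by
  set c := Real.cosh (x/3) with hc
  have hcy : Real.cosh x = 4 * c^3 - 3 * c := by
    have := Real.cosh_three_mul (x/3)
    rw [show 3 * (x/3) = x by ring] at this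
    rw [this]
  have h1c : 1 < c := by
    rw [hc]; exact Real.one_lt_cosh.mpr (by positivity)
  constructor
  · rw [div_lt_iff₀ hx]; have := aux_main hx; linarith [aux_main hx]
  · rw [hcy]
    nlinarith [sq_nonneg (c - 1), mul_pos (mul_pos (sub_pos.mpr h1c) (sub_pos.mpr h1c)) (show (0:ℝ) < c + 2 by linarith)]
end

section
/- For all x in (0, π/2) and all t > 0, (x/sin x)^{2t} + (x/sinh x)^t > 2 and (sinh x/x)^{2t} + (sin x/x)^t > 2; moreover 2·(sinh x/x)^t + (sin x/x)^t > 3 and 2·(x/sin x)^t + (x/sinh x)^t > 3. -/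
open Real
set_option maxHeartbeats 1000000

lemma sinh_taylor {y : ℝ} (h0 : 0 ≤ y) (h1 : y ≤ 1) :
    |Real.sinh y - (y + y^3/6)| ≤ y^5/100 := by
  have hb1 := Real.exp_bound (x := y) (by rwa [abs_of_nonneg h0]) (n := 5) (by norm_num)
  have hb2 := Real.exp_bound (x := -y) (by rwa [abs_neg, abs_of_nonneg h0]) (n := 5) (by norm_num)
  rw [abs_of_nonneg h0] at hb1
  rw [abs_neg, abs_of_nonneg h0] at hb2
  simp only [Finset.sum_range_succ, Finset.sum_range_zero, Nat.factorial] at hb1 hb2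
  rw [Real.sinh_eq]
  rw [abs_le] at hb1 hb2 ⊢
  norm_num at hb1 hb2
  constructor <;> nlinarith [pow_nonneg h0 5]

lemma cosh_taylor {y : ℝ} (h0 : 0 ≤ y) (h1 : y ≤ 1) :
    |Real.cosh y - (1 + y^2/2 + y^4/24)| ≤ y^5/100 := by
  have hb1 := Real.exp_bound (x := y) (by rwa [abs_of_nonneg h0]) (n := 5) (by norm_num)
  have hb2 := Real.exp_bound (x := -y) (by rwa [abs_neg, abs_of_nonneg h0]) (n := 5) (by norm_num)
  rw [abs_of_nonneg h0] at hb1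
  rw [abs_neg, abs_of_nonneg h0] at hb2
  simp only [Finset.sum_range_succ, Finset.sum_range_zero, Nat.factorial] at hb1 hb2
  rw [Real.cosh_eq]
  rw [abs_le] at hb1 hb2 ⊢
  norm_num at hb1 hb2
  constructor <;> nlinarith [pow_nonneg h0 5]


-- key lemma A : sin^2 x * sinh x < x^3 on (0, π/2)
lemma keyA {x : ℝ} (hx : 0 < x) (hx2 : x < π/2) :
    Real.sin x ^ 2 * Real.sinh x < x ^ 3 := by
  set y := x/2 with hy
  have hy0 : 0 < y := by positivity
  have hy1 : y ≤ 0.7875 := by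
    have := Real.pi_lt_d2
    simp only [hy]; linarith
  have hy1' : y ≤ 1 := by linarith
  have hy2 : y^2 ≤ 0.63 := by nlinarith
  have hy4 : y^4 ≤ 0.4 := by nlinarith
  have hy5 : y^5 ≤ 0.4 := by nlinarith
  have hS := sinh_taylor hy0.le hy1'
  have hC := cosh_taylor hy0.le hy1'
  have hcos := Real.cos_bound (x := y) (by rwa [abs_of_nonneg hy0.le])
  rw [abs_of_nonneg hy0.le] at hcos
  rw [abs_le] at hS hC hcos
  have hsiny : Real.sin y < y := Real.sin_lt hy0
  have hsiny0 : 0 < Real.sin y := Real.sin_pos_of_pos_of_lt_pi hy0 (by nlinarith [Real.pi_gt_three])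
  have hcosy0 : 0 < Real.cos y := by nlinarith
  have hcoshy : 0 < Real.cosh y := Real.cosh_pos y
  -- sinh y < y * cosh y
  have m4 : (0:ℝ) < y^4 := by positivity
  have m5 : y^5 ≤ 0.7875*y^4 := by nlinarith
  have m6 : y^6 ≤ 0.63*y^4 := by nlinarith [pow_nonneg hy0.le 4]
  have m7 : (0:ℝ) ≤ y^7 := by positivity
  have m8 : y^8 ≤ 0.4*y^4 := by nlinarith [pow_nonneg hy0.le 4]
  have m9 : y^9 ≤ 0.32*y^4 := by nlinarith [pow_nonneg hy0.le 4, pow_nonneg hy0.le 5]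
  have h1 : Real.sinh y < y * Real.cosh y := by
    have hB : y * (1 + y^2/2 + y^4/24 - y^5/100) ≤ y * Real.cosh y :=
      mul_le_mul_of_nonneg_left (by linarith [hC.1]) hy0.le
    nlinarith [hS.2, pow_pos hy0 3, pow_pos hy0 5]
  -- cos y * cosh y < 1
  have h2 : Real.cos y * Real.cosh y < 1 := by
    have hA : Real.cos y ≤ 1 - y^2/2 + 5*y^4/96 := by linarith [hcos.2]
    have hB : Real.cosh y ≤ 1 + y^2/2 + y^4/24 + y^5/100 := by linarith [hC.2]
    have hprod : Real.cos y * Real.cosh y ≤ (1 - y^2/2 + 5*y^4/96) * (1 + y^2/2 + y^4/24 + y^5/100) :=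
      mul_le_mul hA hB hcoshy.le (by nlinarith [pow_nonneg hy0.le 4])
    nlinarith [m4, m5, m6, m7, m8, m9]
  have hx2y : x = 2 * y := by rw [hy]; ring
  have hsin2 : Real.sin x = 2 * Real.sin y * Real.cos y := by rw [hx2y, Real.sin_two_mul]
  have hsinh2 : Real.sinh x = 2 * Real.sinh y * Real.cosh y := by rw [hx2y, Real.sinh_two_mul]
  have hsinhy0 : 0 < Real.sinh y := Real.sinh_pos_iff.mpr hy0
  have p1 : Real.sinh y * Real.cosh y < y * Real.cosh y ^ 2 := by
    have h := mul_lt_mul_of_pos_right h1 hcoshy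
    have e : y * Real.cosh y * Real.cosh y = y * Real.cosh y ^ 2 := by ring
    rw [e] at h; exact h
  have e1 : Real.sin y ^ 2 ≤ y^2 := pow_le_pow_left₀ hsiny0.le hsiny.le 2
  have p2 : Real.sin y ^ 2 * Real.cos y ^ 2 ≤ y^2 * Real.cos y ^ 2 :=
    mul_le_mul_of_nonneg_right e1 (sq_nonneg _)
  have key : Real.sin y ^ 2 * Real.cos y ^ 2 * (Real.sinh y * Real.cosh y) < y^3 := by
    have q1 : Real.sin y ^ 2 * Real.cos y ^ 2 * (Real.sinh y * Real.cosh y) ≤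
        y^2 * Real.cos y ^ 2 * (Real.sinh y * Real.cosh y) := by
      apply mul_le_mul_of_nonneg_right p2
      positivity
    have q2 : y^2 * Real.cos y ^ 2 * (Real.sinh y * Real.cosh y) <
        y^2 * Real.cos y ^ 2 * (y * Real.cosh y ^ 2) := by
      apply mul_lt_mul_of_pos_left p1
      positivity
    have q3 : y^2 * Real.cos y ^ 2 * (y * Real.cosh y ^ 2) = y^3 * (Real.cos y * Real.cosh y)^2 := by ring
    have q4 : y^3 * (Real.cos y * Real.cosh y)^2 < y^3 * 1 := by
      apply mul_lt_mul_of_pos_left _ (by positivity)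
      exact pow_lt_one₀ (mul_pos hcosy0 hcoshy).le h2 (by norm_num)
    linarith
  rw [hsin2, hsinh2, hx2y]
  have expand : (2*Real.sin y*Real.cos y)^2 * (2*Real.sinh y*Real.cosh y)
      = 8 * (Real.sin y^2 * Real.cos y^2 * (Real.sinh y * Real.cosh y)) := by ring
  have expand2 : (2*y)^3 = 8 * y^3 := by ring
  rw [expand, expand2]
  linarith

lemma polyB {x : ℝ} (hx : 0 < x) (hxx : x^2 ≤ 2.480625) :
    x^3 < (x - (19/100)*x^3) * (x + x^3/6)^2 := by
  have hx4 : x^4 ≤ 6.1536 := by nlinarith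
  have n7 : x^7 ≤ 2.480625*x^5 := by nlinarith [pow_pos hx 5]
  have n9 : x^9 ≤ 6.1536*x^5 := by nlinarith [pow_pos hx 5]
  nlinarith [pow_pos hx 5, n7, n9]

-- sin x ≥ x - 0.19 x^3 on (0, π/2)
lemma sin_lb {x : ℝ} (hx : 0 < x) (hx2 : x < π/2) :
    x - (19/100)*x^3 ≤ Real.sin x := by
  set y := x/2 with hy
  have hy0 : 0 < y := by positivity
  have hy1 : y ≤ 0.7875 := by
    have := Real.pi_lt_d2
    simp only [hy]; linarith
  have hy1' : y ≤ 1 := by linarith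
  have hcos := Real.cos_bound (x := y) (by rwa [abs_of_nonneg hy0.le])
  have hsin := Real.sin_bound (x := y) (by rwa [abs_of_nonneg hy0.le])
  rw [abs_of_nonneg hy0.le] at hcos hsin
  rw [abs_le] at hcos hsin
  have hsl : y - y^3/6 - 5*y^4/96 ≤ Real.sin y := by nlinarith [hsin.1, mul_nonneg (sub_nonneg.2 hy1') (pow_pos hy0 4).le]
  have hcl : 1 - y^2/2 - 5*y^4/96 ≤ Real.cos y := by linarith [hcos.1]
  clear hsin hcos
  have hy2 : y^2 ≤ 0.63 := by nlinarith
  have hy4 : y^4 ≤ 0.4 := by nlinarith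
  have hsl0 : (0:ℝ) ≤ y - y^3/6 - 5*y^4/96 := by nlinarith
  have hcl0 : (0:ℝ) ≤ 1 - y^2/2 - 5*y^4/96 := by nlinarith
  have hsc : (y - y^3/6 - 5*y^4/96) * (1 - y^2/2 - 5*y^4/96) ≤ Real.sin y * Real.cos y :=
    mul_le_mul hsl hcl hcl0 (le_trans hsl0 hsl)
  have hsc2 : y - (76/100)*y^3 ≤ (y - y^3/6 - 5*y^4/96) * (1 - y^2/2 - 5*y^4/96) := by
    nlinarith [pow_pos hy0 3, pow_pos hy0 5, pow_pos hy0 6, pow_pos hy0 7, pow_pos hy0 8]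
  have hx2y : x = 2 * y := by rw [hy]; ring
  have hsin2 : Real.sin x = 2 * (Real.sin y * Real.cos y) := by
    rw [hx2y, Real.sin_two_mul]; ring
  rw [hsin2, hx2y]; nlinarith [hsc, hsc2]

-- sinh x ≥ x + x^3/6 for 0 < x < π/2
lemma sinh_lb {x : ℝ} (hx : 0 < x) (hx2 : x < π/2) :
    x + x^3/6 ≤ Real.sinh x := by
  set y := x/2 with hy
  have hy0 : 0 < y := by positivity
  have hy1 : y ≤ 0.7875 := by
    have := Real.pi_lt_d2
    simp only [hy]; linarith
  have hy1' : y ≤ 1 := by linarith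
  have hS := sinh_taylor hy0.le hy1'
  have hC := cosh_taylor hy0.le hy1'
  rw [abs_le] at hS hC
  have hSl : y + y^3/6 - y^5/100 ≤ Real.sinh y := by linarith [hS.1]
  have hCl : 1 + y^2/2 + y^4/24 - y^5/100 ≤ Real.cosh y := by linarith [hC.1]
  clear hS hC
  have hy5 : y^5 ≤ y^3 := pow_le_pow_of_le_one hy0.le hy1' (by norm_num)
  have hSl0 : (0:ℝ) ≤ y + y^3/6 - y^5/100 := by nlinarith [pow_pos hy0 3]
  have hCl0 : (0:ℝ) ≤ 1 + y^2/2 + y^4/24 - y^5/100 := by nlinarith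
  have hSC : (y + y^3/6 - y^5/100) * (1 + y^2/2 + y^4/24 - y^5/100) ≤ Real.sinh y * Real.cosh y :=
    mul_le_mul hSl hCl hCl0 (le_trans hSl0 hSl)
  have hSC2 : y + (2/3)*y^3 ≤ (y + y^3/6 - y^5/100) * (1 + y^2/2 + y^4/24 - y^5/100) := by
    nlinarith [pow_pos hy0 5, pow_pos hy0 6, pow_pos hy0 7, pow_pos hy0 8, pow_pos hy0 9,
      pow_pos hy0 10]
  have hx2y : x = 2 * y := by rw [hy]; ring
  have hsinh2 : Real.sinh x = 2 * (Real.sinh y * Real.cosh y) := by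
    rw [hx2y, Real.sinh_two_mul]; ring
  rw [hsinh2, hx2y]; nlinarith [hSC, hSC2]

-- key lemma B : x^3 < sin x * sinh x^2 on (0, π/2)
lemma keyB {x : ℝ} (hx : 0 < x) (hx2 : x < π/2) :
    x ^ 3 < Real.sin x * Real.sinh x ^ 2 := by
  have hsinx := sin_lb hx hx2
  have hsinhx := sinh_lb hx hx2
  have hxx : x^2 ≤ 2.480625 := by
    have := Real.pi_lt_d2
    nlinarith
  have hlb0 : (0:ℝ) < x - (19/100)*x^3 := by nlinarith
  have hlb1 : (0:ℝ) < x + x^3/6 := by positivity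
  have hfin : (x - (19/100)*x^3) * (x + x^3/6)^2 ≤ Real.sin x * Real.sinh x ^ 2 := by
    have h1 : (x + x^3/6)^2 ≤ Real.sinh x ^ 2 := pow_le_pow_left₀ hlb1.le hsinhx 2
    exact mul_le_mul hsinx h1 (by positivity) (by linarith [Real.sin_lt hx])
  have hpoly : x^3 < (x - (19/100)*x^3) * (x + x^3/6)^2 := polyB hx hxx
  linarith

lemma two_lt_aux {u v : ℝ} (hu : 0 < u) (hv : 0 < v) (h : 1 < u^2 * v) : 2 < u^2 + v := by
  nlinarith [sq_nonneg (u^2 - 1), mul_pos hu hu]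

lemma three_lt_aux {u v : ℝ} (hu : 0 < u) (hv : 0 < v) (h : 1 < u^2 * v) : 3 < 2*u + v := by
  nlinarith [mul_nonneg (sq_nonneg (u-1)) (by linarith : (0:ℝ) ≤ 2*u+1), mul_pos hu hu]

lemma rpow_sq_helper {a t : ℝ} (ha : 0 < a) : (a ^ t)^2 = (a^2) ^ t := by
  rw [← Real.rpow_natCast (a ^ t) 2, ← Real.rpow_natCast a 2, ← Real.rpow_mul ha.le,
    ← Real.rpow_mul ha.le, mul_comm]

lemma rpow_helper {a b t : ℝ} (ha : 0 < a) (hb : 0 < b) (ht : 0 < t) (h : 1 < a^2 * b) :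
    1 < (a ^ t)^2 * b ^ t := by
  rw [rpow_sq_helper ha, ← Real.mul_rpow (by positivity) hb.le]
  exact (Real.one_lt_rpow_iff_of_pos (by nlinarith)).mpr (Or.inl ⟨h, ht⟩)

theorem stmt19 (x t : ℝ) (hx : 0 < x) (hx2 : x < π/2) (ht : 0 < t) :
    (x/Real.sin x) ^ (2*t) + (x/Real.sinh x) ^ t > 2 ∧
    (Real.sinh x/x) ^ (2*t) + (Real.sin x/x) ^ t > 2 ∧
    2*(Real.sinh x/x) ^ t + (Real.sin x/x) ^ t > 3 ∧
    2*(x/Real.sin x) ^ t + (x/Real.sinh x) ^ t > 3 := by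
  have hsin0 : 0 < Real.sin x := Real.sin_pos_of_pos_of_lt_pi hx (by linarith [Real.pi_pos])
  have hsinh0 : 0 < Real.sinh x := Real.sinh_pos_iff.mpr hx
  have ha : 0 < x / Real.sin x := by positivity
  have hb : 0 < x / Real.sinh x := by positivity
  have hc : 0 < Real.sinh x / x := by positivity
  have hd : 0 < Real.sin x / x := by positivity
  have hA : 1 < (x / Real.sin x)^2 * (x / Real.sinh x) := by
    have e : (x / Real.sin x)^2 * (x / Real.sinh x) = x^3 / (Real.sin x ^ 2 * Real.sinh x) := by
      field_simp
    rw [e, lt_div_iff₀ (by positivity), one_mul]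
    exact keyA hx hx2
  have hB : 1 < (Real.sinh x / x)^2 * (Real.sin x / x) := by
    have e : (Real.sinh x / x)^2 * (Real.sin x / x) = (Real.sin x * Real.sinh x ^ 2) / x^3 := by
      field_simp
    rw [e, lt_div_iff₀ (by positivity), one_mul]
    exact keyB hx hx2
  have hu : 0 < (x / Real.sin x) ^ t := Real.rpow_pos_of_pos ha t
  have hv : 0 < (x / Real.sinh x) ^ t := Real.rpow_pos_of_pos hb t
  have hw : 0 < (Real.sinh x / x) ^ t := Real.rpow_pos_of_pos hc t
  have hz : 0 < (Real.sin x / x) ^ t := Real.rpow_pos_of_pos hd t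
  have hAB : 1 < ((x / Real.sin x) ^ t)^2 * (x / Real.sinh x) ^ t := rpow_helper ha hb ht hA
  have hCD : 1 < ((Real.sinh x / x) ^ t)^2 * (Real.sin x / x) ^ t := rpow_helper hc hd ht hB
  have e2 : ∀ z : ℝ, 0 < z → z ^ (2*t) = (z ^ t)^2 := by
    intro z hz0
    rw [mul_comm, Real.rpow_mul hz0.le, ← Real.rpow_natCast (z ^ t) 2]
    norm_num
  rw [e2 _ ha, e2 _ hc]
  exact ⟨two_lt_aux hu hv hAB, two_lt_aux hw hz hCD, three_lt_aux hw hz hCD, three_lt_aux hu hv hAB⟩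
end
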